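/- Let (U, I) be a standard implicational base with closure operator cl, c ∈ U, U_c = {x ∈ U : c ∉ cl({x})} assumed not cl-closed, and (U_c, I_c) the derived base as in the paper. Then the D-generators of c with respect to (U, I) are exactly the D-minimal keys of (U_c, I_c). -/
import Mathlib


/-- `F` is closed for the implicational base `I`. -/
def ImpClosed {U : Type*} (I : Set (Set U × U)) (F : Set U) : Prop :=
  ∀ p ∈ I, p.1 ⊆ F → p.2 ∈ F

/-- The closure operator induced by an implicational base `I`. -/
def clI {U : Type*} (I : Set (Set U × U)) (A : Set U) : Set U :=
  ⋂₀ {F | ImpClosed I F ∧ A ⊆ F}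

/-- `cl^b(A) = ⋃_{a ∈ A} cl({a})`. -/
def clb {U : Type*} (cl : Set U → Set U) (A : Set U) : Set U := ⋃ a ∈ A, cl {a}

/-- `A` is a minimal generator of `c`. -/
def MinGen {U : Type*} (cl : Set U → Set U) (c : U) (A : Set U) : Prop :=
  c ∉ A ∧ c ∈ cl A ∧ ∀ A' ⊂ A, c ∉ cl A'

/-- `A` is a `D`-generator of `c`. -/
def DGen {U : Type*} (cl : Set U → Set U) (c : U) (A : Set U) : Prop :=
  MinGen cl c A ∧ c ∉ clb cl A ∧
    ∀ A', MinGen cl c A' → A' ⊆ clb cl A → A' = A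

/-- `K` is a minimal key of the closure space with groundset `G` and closure
operator `cl'`. -/
def MinKey {U : Type*} (cl' : Set U → Set U) (G : Set U) (K : Set U) : Prop :=
  K ⊆ G ∧ cl' K = G ∧ ∀ K' ⊂ K, cl' K' ≠ G

/-- `K` is a `D`-minimal key. -/
def DMinKey {U : Type*} (cl' : Set U → Set U) (G : Set U) (K : Set U) : Prop :=
  MinKey cl' G K ∧
    ∀ K', MinKey cl' G K' → clb cl' K' ⊆ clb cl' K → K' = K

lemma subset_clI {U : Type*} (I : Set (Set U × U)) (A : Set U) : A ⊆ clI I A :=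
  fun _ hx _ hF => hF.2 hx

lemma clI_closed {U : Type*} (I : Set (Set U × U)) (A : Set U) : ImpClosed I (clI I A) := by
  intro p hp hsub F hF
  exact hF.1 p hp (fun x hx => hsub hx F hF)

lemma clI_min {U : Type*} {I : Set (Set U × U)} {A F : Set U}
    (hF : ImpClosed I F) (hAF : A ⊆ F) : clI I A ⊆ F :=
  fun x hx => hx F ⟨hF, hAF⟩

lemma clI_mono {U : Type*} {I : Set (Set U × U)} {A B : Set U} (h : A ⊆ B) :
    clI I A ⊆ clI I B :=
  clI_min (clI_closed I B) (h.trans (subset_clI I B))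

lemma clI_idem {U : Type*} (I : Set (Set U × U)) (A : Set U) :
    clI I (clI I A) = clI I A :=
  le_antisymm (clI_min (clI_closed I A) le_rfl) (subset_clI I _)

lemma mem_clb {U : Type*} {cl : Set U → Set U} {A : Set U} {x : U} :
    x ∈ clb cl A ↔ ∃ a ∈ A, x ∈ cl {a} := by simp [clb]

section Derived

variable {U : Type*} {I : Set (Set U × U)} {c : U} {Uc : Set U} {Ic : Set (Set U × U)}
variable (hUc : Uc = {x : U | c ∉ clI I {x}})
variable (hIc : Ic =
      {p | p ∈ I ∧ p.1 ∪ {p.2} ⊆ Uc} ∪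
      {p | ∃ d : U, (p.1, d) ∈ I ∧ p.1 ⊆ Uc ∧ d ∉ Uc ∧
        p.2 ∈ Uc \ clb (clI I) p.1})

include hUc

lemma c_not_mem_Uc : c ∉ Uc := by
  rw [hUc]; exact fun h => h (subset_clI I {c} rfl)

lemma cl_subset_Uc {X : Set U} (hc : c ∉ clI I X) : clI I X ⊆ Uc := by
  intro y hy
  rw [hUc]
  intro hcy
  exact hc ((clI_idem I X ▸ clI_mono (Set.singleton_subset_iff.2 hy)) hcy)

lemma clb_subset_Uc {A : Set U} (hA : A ⊆ Uc) : clb (clI I) A ⊆ Uc := by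
  intro y hy
  rw [mem_clb] at hy
  obtain ⟨a, ha, hya⟩ := hy
  have : c ∉ clI I {a} := by rw [hUc] at hA; exact hA ha
  exact cl_subset_Uc hUc this hya

lemma mem_Uc_iff {a : U} : a ∈ Uc ↔ c ∉ clI I {a} := by rw [hUc]; rfl

include hIc

omit hUc in
lemma Uc_IcClosed : ImpClosed Ic Uc := by
  intro p hp _
  rw [hIc] at hp
  rcases hp with ⟨_, hsub⟩ | ⟨d, _, _, _, hb⟩
  · exact hsub (Or.inr rfl)
  · exact hb.1

lemma clIc_subset_Uc {X : Set U} (hX : X ⊆ Uc) : clI Ic X ⊆ Uc :=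
  clI_min (Uc_IcClosed hIc) hX

/-- If `c ∉ cl X` then the derived closure agrees with the original one. -/
lemma clIc_eq_clI {X : Set U} (hc : c ∉ clI I X) :
    clI Ic X = clI I X := by
  have h1 : clI I X ⊆ Uc := cl_subset_Uc hUc hc
  have hIcC : ImpClosed Ic (clI I X) := by
    intro p hp hsub
    rw [hIc] at hp
    rcases hp with ⟨hpI, _⟩ | ⟨d, hd, _, hdU, _⟩
    · exact clI_closed I X p hpI hsub
    · exact absurd (h1 (clI_closed I X (p.1, d) hd hsub)) hdU
  have le1 : clI Ic X ⊆ clI I X := clI_min hIcC (subset_clI I X)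
  have hIC : ImpClosed I (clI Ic X) := by
    intro p hp hsub
    by_cases hpU : p.2 ∈ Uc
    · refine clI_closed Ic X p ?_ hsub
      rw [hIc]
      exact Or.inl ⟨hp, Set.union_subset ((hsub.trans le1).trans h1)
        (Set.singleton_subset_iff.2 hpU)⟩
    · exact absurd (h1 (clI_closed I X p hp (hsub.trans le1))) hpU
  exact le_antisymm le1 (clI_min hIC (subset_clI Ic X))

/-- If `c ∈ cl X` then the derived closure of `X` is all of `Uc`. -/
lemma clIc_eq_Uc {X : Set U} (hX : X ⊆ Uc) (hc : c ∈ clI I X) :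
    clI Ic X = Uc := by
  have hsub : clI Ic X ⊆ Uc := clIc_subset_Uc hUc hIc hX
  by_cases h : ImpClosed I (clI Ic X)
  · exact absurd (hsub (clI_min h (subset_clI Ic X) hc)) (c_not_mem_Uc hUc)
  · simp only [ImpClosed, not_forall] at h
    obtain ⟨p, hp, hp1, hp2⟩ := h
    have hdU : p.2 ∉ Uc := by
      intro hd
      refine hp2 (clI_closed Ic X p ?_ hp1)
      rw [hIc]
      exact Or.inl ⟨hp, Set.union_subset (hp1.trans hsub) (Set.singleton_subset_iff.2 hd)⟩
    have hclb : clb (clI I) p.1 ⊆ clI Ic X := by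
      intro y hy
      rw [mem_clb] at hy
      obtain ⟨a, ha, hya⟩ := hy
      have haU : a ∈ Uc := hsub (hp1 ha)
      have hca : c ∉ clI I {a} := (mem_Uc_iff hUc).1 haU
      have heq : clI Ic {a} = clI I {a} := clIc_eq_clI hUc hIc hca
      have : clI Ic {a} ⊆ clI Ic X :=
        clI_idem Ic X ▸ clI_mono (Set.singleton_subset_iff.2 (hp1 ha))
      exact this (heq ▸ hya)
    refine le_antisymm hsub (fun b hbU => ?_)
    by_cases hbc : b ∈ clb (clI I) p.1
    · exact hclb hbc
    · refine clI_closed Ic X (p.1, b) ?_ hp1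
      rw [hIc]
      exact Or.inr ⟨p.2, by simpa using hp, hp1.trans hsub, hdU, ⟨hbU, hbc⟩⟩

lemma clb_clIc_eq {A : Set U} (hA : A ⊆ Uc) :
    clb (clI Ic) A = clb (clI I) A := by
  ext y
  rw [mem_clb, mem_clb]
  constructor <;> rintro ⟨a, ha, hya⟩ <;> refine ⟨a, ha, ?_⟩ <;>
    rw [clIc_eq_clI hUc hIc ((mem_Uc_iff hUc).1 (hA ha))] at * <;> exact hya

lemma key_iff (hnotclosed : clI I Uc ≠ Uc) {A : Set U} (hA : A ⊆ Uc) :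
    c ∈ clI I A ↔ clI Ic A = Uc := by
  constructor
  · exact clIc_eq_Uc hUc hIc hA
  · intro h
    by_contra hc
    rw [clIc_eq_clI hUc hIc hc] at h
    exact hnotclosed (h ▸ (h ▸ clI_idem I A))

lemma mingen_iff_minkey (hnotclosed : clI I Uc ≠ Uc) {A : Set U} (hA : A ⊆ Uc) :
    MinGen (clI I) c A ↔ MinKey (clI Ic) Uc A := by
  constructor
  · rintro ⟨_, hcA, hmin⟩
    refine ⟨hA, (key_iff hUc hIc hnotclosed hA).1 hcA, fun K' hK' heq => ?_⟩
    exact hmin K' hK' ((key_iff hUc hIc hnotclosed (hK'.subset.trans hA)).2 heq)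
  · rintro ⟨_, hcl, hmin⟩
    refine ⟨fun hcA => c_not_mem_Uc hUc (hA hcA),
      (key_iff hUc hIc hnotclosed hA).2 hcl, fun A' hA' hc => ?_⟩
    exact hmin A' hA' ((key_iff hUc hIc hnotclosed (hA'.subset.trans hA)).1 hc)

end Derived

/-- the `D`-generators of `c` w.r.t. `(U, I)` are exactly the
`D`-minimal keys of the derived base `(U_c, I_c)`. -/
theorem stmt17 {U : Type*} [Fintype U] (I : Set (Set U × U))
    (hstd : ∀ x : U, ImpClosed I (clI I {x} \ {x}))
    (c : U)
    (Uc : Set U) (hUc : Uc = {x : U | c ∉ clI I {x}})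
    (hnotclosed : clI I Uc ≠ Uc)
    (Ic : Set (Set U × U))
    (hIc : Ic =
      {p | p ∈ I ∧ p.1 ∪ {p.2} ⊆ Uc} ∪
      {p | ∃ d : U, (p.1, d) ∈ I ∧ p.1 ⊆ Uc ∧ d ∉ Uc ∧
        p.2 ∈ Uc \ clb (clI I) p.1}) :
    ∀ A : Set U, DGen (clI I) c A ↔ DMinKey (clI Ic) Uc A := by
  intro A
  constructor
  · rintro ⟨hmg, hclb, hD⟩
    have hA : A ⊆ Uc := by
      intro a ha
      rw [mem_Uc_iff hUc]
      exact fun hc => hclb (mem_clb.2 ⟨a, ha, hc⟩)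
    refine ⟨(mingen_iff_minkey hUc hIc hnotclosed hA).1 hmg, ?_⟩
    intro K' hK' hsubclb
    have hK'U : K' ⊆ Uc := hK'.1
    have hK'mg : MinGen (clI I) c K' := (mingen_iff_minkey hUc hIc hnotclosed hK'U).2 hK'
    rw [clb_clIc_eq hUc hIc hK'U, clb_clIc_eq hUc hIc hA] at hsubclb
    exact hD K' hK'mg
      (fun a ha => hsubclb (mem_clb.2 ⟨a, ha, subset_clI I {a} rfl⟩))
  · rintro ⟨hmk, hD⟩
    have hA : A ⊆ Uc := hmk.1
    have hmg := (mingen_iff_minkey hUc hIc hnotclosed hA).2 hmk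
    refine ⟨hmg, ?_, ?_⟩
    · intro hc
      rw [mem_clb] at hc
      obtain ⟨a, ha, hca⟩ := hc
      exact (mem_Uc_iff hUc).1 (hA ha) hca
    · intro A' hA' hsub
      have hA'U : A' ⊆ Uc := hsub.trans (clb_subset_Uc hUc hA)
      apply hD A' ((mingen_iff_minkey hUc hIc hnotclosed hA'U).1 hA')
      rw [clb_clIc_eq hUc hIc hA'U, clb_clIc_eq hUc hIc hA]
      intro y hy
      rw [mem_clb] at hy ⊢
      obtain ⟨a', ha', hya'⟩ := hy
      obtain ⟨a, ha, ha'a⟩ := mem_clb.1 (hsub ha')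
      exact ⟨a, ha,
        (clI_idem I {a} ▸ clI_mono (Set.singleton_subset_iff.2 ha'a)) hya'⟩
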